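/- Fixed-point lemma for tree codes: for every continuous function F : (List ℕ → ℕ) → (List ℕ → ℕ) there exists α : List ℕ → ℕ (with values in {0,1}) such that for every β : ℕ → ℕ: there exists n with α [β 0, …, β (n-1)] ≠ 0 if and only if there exists n with (F α) [β 0, …, β (n-1)] ≠ 0. Consequently α ∈ A¹₁ ↔ F α ∈ A¹₁ and α ∈ E¹₁ ↔ F α ∈ E¹₁. -/
import Mathlib


/-- The initial segment `[β 0, …, β (n-1)]` of an infinite sequence `β`. -/
def seg (β : ℕ → ℕ) (n : ℕ) : List ℕ := (List.range n).map β

/-- The set of ill-founded tree codes. -/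
def E11 : Set (List ℕ → ℕ) := {γ | ∃ β : ℕ → ℕ, ∀ n, γ (seg β n) = 0}

/-- The set of well-founded tree codes. -/
def A11 : Set (List ℕ → ℕ) := {γ | ∀ β : ℕ → ℕ, ∃ n, γ (seg β n) ≠ 0}

open Denumerable

open Classical in
/-- One step of the self-referential construction. -/
noncomputable def fptStep (F : (List ℕ → ℕ) → (List ℕ → ℕ)) (k : ℕ) (p : ℕ → ℕ) : ℕ :=
  if ∃ t, t <+: (ofNat (List ℕ) k) ∧
      ∀ γ : List ℕ → ℕ, (∀ j, j < k → γ (ofNat (List ℕ) j) = p j) → F γ t ≠ 0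
  then 1 else 0

/-- Finite approximations of the fixed-point code. -/
noncomputable def fptApprox (F : (List ℕ → ℕ) → (List ℕ → ℕ)) : ℕ → ℕ → ℕ
  | 0 => fun _ => 0
  | (k+1) => fun j => if j = k then fptStep F k (fptApprox F k) else fptApprox F k j

/-- The fixed-point code, as a function on indices. -/
noncomputable def fptN (F : (List ℕ → ℕ) → (List ℕ → ℕ)) (k : ℕ) : ℕ :=
  fptApprox F (k+1) k

lemma fptStep_congr (F : (List ℕ → ℕ) → (List ℕ → ℕ)) (k : ℕ) {p q : ℕ → ℕ}
    (h : ∀ j, j < k → p j = q j) : fptStep F k p = fptStep F k q := by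
  unfold fptStep
  congr 1
  apply propext
  constructor <;> rintro ⟨t, ht, hγ⟩ <;> refine ⟨t, ht, fun γ hag => hγ γ fun j hj => ?_⟩
  · rw [hag j hj, h j hj]
  · rw [hag j hj, h j hj]

lemma fptApprox_eq (F : (List ℕ → ℕ) → (List ℕ → ℕ)) :
    ∀ k j, j < k → fptApprox F k j = fptN F j := by
  intro k
  induction k with
  | zero => intro j hj; omega
  | succ k ih =>
    intro j hj
    rcases Nat.lt_succ_iff_lt_or_eq.mp hj with h | rfl
    · show (if j = k then _ else fptApprox F k j) = _
      rw [if_neg (Nat.ne_of_lt h)]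
      exact ih j h
    · show (if j = j then _ else _) = fptN F j
      rw [if_pos rfl]
      show _ = fptApprox F (j+1) j
      show _ = (if j = j then fptStep F j (fptApprox F j) else fptApprox F j j)
      rw [if_pos rfl]

lemma fptN_eq (F : (List ℕ → ℕ) → (List ℕ → ℕ)) (k : ℕ) :
    fptN F k = fptStep F k (fptN F) := by
  show fptApprox F (k+1) k = _
  show (if k = k then fptStep F k (fptApprox F k) else _) = _
  rw [if_pos rfl]
  exact fptStep_congr F k (fun j hj => fptApprox_eq F k j hj)

lemma seg_length (β : ℕ → ℕ) (n : ℕ) : (seg β n).length = n := by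
  simp [seg]

lemma seg_take (β : ℕ → ℕ) {m n : ℕ} (h : m ≤ n) : (seg β n).take m = seg β m := by
  simp [seg, ← List.map_take, List.take_range, Nat.min_eq_left h]

lemma seg_prefix (β : ℕ → ℕ) {m n : ℕ} (h : m ≤ n) : seg β m <+: seg β n := by
  rw [← seg_take β h]; exact List.take_prefix m _

lemma prefix_seg {β : ℕ → ℕ} {n : ℕ} {t : List ℕ} (h : t <+: seg β n) :
    t = seg β t.length ∧ t.length ≤ n := by
  have hl : t.length ≤ n := by
    have := h.length_le; rwa [seg_length] at this
  refine ⟨?_, hl⟩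
  have h2 := List.prefix_iff_eq_take.mp h
  rwa [seg_take β hl] at h2

/-- Fixed-point lemma for tree codes: every continuous operation on tree codes
has a `{0,1}`-valued code that forbids exactly the same infinite paths as its
image; consequently it belongs to `A¹₁` (resp. `E¹₁`) iff its image does. -/
theorem fixed_point_tree_codes (F : (List ℕ → ℕ) → (List ℕ → ℕ))
    (hF : Continuous F) :
    ∃ α : List ℕ → ℕ, (∀ s, α s = 0 ∨ α s = 1) ∧
      (∀ β : ℕ → ℕ, (∃ n, α (seg β n) ≠ 0) ↔ ∃ n, F α (seg β n) ≠ 0) ∧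
      (α ∈ A11 ↔ F α ∈ A11) ∧ (α ∈ E11 ↔ F α ∈ E11) := by
  classical
  set α : List ℕ → ℕ := fun s => fptN F (Encodable.encode s) with hα
  have hα_ofNat : ∀ j : ℕ, α (ofNat (List ℕ) j) = fptN F j := by
    intro j; simp [hα]
  have hval : ∀ s, α s = 0 ∨ α s = 1 := by
    intro s
    rw [hα]
    simp only [fptN_eq]
    unfold fptStep
    split <;> simp
  have key : ∀ β : ℕ → ℕ, (∃ n, α (seg β n) ≠ 0) ↔ ∃ n, F α (seg β n) ≠ 0 := by
    intro β
    constructor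
    · rintro ⟨n, hn⟩
      replace hn : fptN F (Encodable.encode (seg β n)) ≠ 0 := hn
      rw [fptN_eq] at hn
      unfold fptStep at hn
      split at hn
      · rename_i hcond
        obtain ⟨t, htpre, hγ⟩ := hcond
        rw [Denumerable.ofNat_encode] at htpre
        have hFt : F α t ≠ 0 := hγ α (fun j _ => hα_ofNat j)
        obtain ⟨ht, _⟩ := prefix_seg htpre
        exact ⟨t.length, by rwa [← ht]⟩
      · exact absurd rfl hn
    · rintro ⟨n, hn⟩
      -- continuity: F γ (seg β n) ≠ 0 on a basic neighborhood of α
      have hcont : Continuous fun γ : List ℕ → ℕ => F γ (seg β n) :=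
        (continuous_apply (seg β n)).comp hF
      have hopen : IsOpen {γ : List ℕ → ℕ | F γ (seg β n) ≠ 0} := by
        have : {γ : List ℕ → ℕ | F γ (seg β n) ≠ 0}
            = (fun γ : List ℕ → ℕ => F γ (seg β n)) ⁻¹' ({0}ᶜ) := rfl
        rw [this]
        exact hcont.isOpen_preimage _ (isOpen_discrete _)
      obtain ⟨I, u, hu, hsub⟩ := isOpen_pi_iff.mp hopen α hn
      -- bound on the indices appearing in I
      set K : ℕ := I.sup Encodable.encode with hK
      -- pick N ≥ n whose code exceeds K
      have ginj : Function.Injective fun m : ℕ => Encodable.encode (seg β (n + m)) := by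
        intro a b hab
        have := Encodable.encode_injective hab
        have h2 := congrArg List.length this
        rw [seg_length, seg_length] at h2
        omega
      obtain ⟨c, hc_mem, hcK⟩ := (Set.infinite_range_of_injective ginj).exists_gt K
      obtain ⟨m, rfl⟩ := hc_mem
      set k : ℕ := Encodable.encode (seg β (n + m)) with hk
      refine ⟨n + m, ?_⟩
      show fptN F (Encodable.encode (seg β (n + m))) ≠ 0
      rw [fptN_eq]
      unfold fptStep
      rw [if_pos]
      · simp
      refine ⟨seg β n, ?_, ?_⟩
      · rw [Denumerable.ofNat_encode]
        exact seg_prefix β (Nat.le_add_right n m)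
      · intro γ hag
        have hγI : γ ∈ (I : Set (List ℕ)).pi u := by
          intro s hs
          have hsK : Encodable.encode s ≤ K := Finset.le_sup hs
          have hsk : Encodable.encode s < k := lt_of_le_of_lt hsK hcK
          have := hag (Encodable.encode s) hsk
          rw [Denumerable.ofNat_encode] at this
          rw [this]
          exact (hu s hs).2
        exact hsub hγI
  refine ⟨α, hval, key, ?_, ?_⟩
  · constructor <;> intro h β <;> [exact (key β).mp (h β); exact (key β).mpr (h β)]
  · constructor <;> rintro ⟨β, hβ⟩ <;> refine ⟨β, fun n => ?_⟩
    · by_contra hne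
      obtain ⟨m, hm⟩ := (key β).mpr ⟨n, hne⟩
      exact hm (hβ m)
    · by_contra hne
      obtain ⟨m, hm⟩ := (key β).mp ⟨n, hne⟩
      exact hm (hβ m)
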